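/- Let q be a prime power and let 1 ≤ r ≤ k ≤ n−1 be integers. Then 𝒞_q(n,k,r) ≤ q^{n−k} · 𝒞_q(n−1, k−1, r−1) + 𝒞_q(n−1, k, r). -/

import Mathlib

open Module

/-- `coveringNumber F n k r` is the minimum number of `k`-dimensional `F`-linear subspaces
of `F^n` needed so that every `r`-dimensional subspace is contained in at least one of them. -/
noncomputable def coveringNumber (F : Type) [Field F] (n k r : ℕ) : ℕ :=
  sInf { m : ℕ | ∃ S : Finset (Submodule F (Fin n → F)),
    S.card = m ∧
    (∀ X ∈ S, finrank F X = k) ∧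
    (∀ Y : Submodule F (Fin n → F), finrank F Y = r → ∃ X ∈ S, Y ≤ X) }

section Aux

variable {F : Type} [Field F]

/-! ### The embedding of `F^m` into `F^(m+1)` -/

noncomputable def emb (F : Type) [Field F] (m : ℕ) : (Fin m → F) →ₗ[F] (Fin (m+1) → F) :=
  LinearMap.pi (Fin.lastCases (0 : (Fin m → F) →ₗ[F] F) (fun i => LinearMap.proj i))

@[simp] lemma emb_last (m : ℕ) (x : Fin m → F) : emb F m x (Fin.last m) = 0 := by
  simp [emb, LinearMap.pi_apply]

@[simp] lemma emb_castSucc (m : ℕ) (x : Fin m → F) (i : Fin m) :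
    emb F m x (Fin.castSucc i) = x i := by
  simp [emb, LinearMap.pi_apply]

lemma emb_inj (m : ℕ) : Function.Injective (emb F m) := by
  rw [← LinearMap.ker_eq_bot]
  ext x
  simp only [LinearMap.mem_ker, Submodule.mem_bot]
  constructor
  · intro h; funext i
    have := congrFun h (Fin.castSucc i)
    simpa using this
  · rintro rfl; simp

lemma range_emb (m : ℕ) :
    LinearMap.range (emb F m) = LinearMap.ker (LinearMap.proj (R := F) (Fin.last m)) := by
  ext z
  simp only [LinearMap.mem_range, LinearMap.mem_ker, LinearMap.proj_apply]
  constructor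
  · rintro ⟨x, rfl⟩; simp
  · intro hz
    refine ⟨fun i => z (Fin.castSucc i), ?_⟩
    funext j
    induction j using Fin.lastCases with
    | last => simp [hz]
    | cast i => simp

lemma finrank_map_emb (m : ℕ) (p : Submodule F (Fin m → F)) :
    finrank F (p.map (emb F m)) = finrank F p :=
  (LinearEquiv.finrank_eq (Submodule.equivMapOfInjective _ (emb_inj m) p)).symm

lemma map_comap_emb (m : ℕ) (Y : Submodule F (Fin (m+1) → F))
    (hY : Y ≤ LinearMap.ker (LinearMap.proj (R := F) (Fin.last m))) :
    (Y.comap (emb F m)).map (emb F m) = Y := by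
  rw [Submodule.map_comap_eq, range_emb]
  exact inf_eq_right.mpr hY

lemma comap_map_emb (m : ℕ) (p : Submodule F (Fin m → F)) :
    (p.map (emb F m)).comap (emb F m) = p := by
  rw [Submodule.comap_map_eq, LinearMap.ker_eq_bot.mpr (emb_inj m), sup_bot_eq]

/-! ### Generic finrank lemmas -/

lemma finrank_sup_span_singleton {V : Type} [AddCommGroup V] [Module F V] [FiniteDimensional F V]
    {p : Submodule F V} {v : V} (hv : v ∉ p) :
    finrank F ↥(p ⊔ Submodule.span F {v}) = finrank F p + 1 := by
  have hinf : p ⊓ Submodule.span F {v} = ⊥ := by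
    rw [eq_bot_iff]
    rintro x ⟨hx1, hx2⟩
    obtain ⟨c, rfl⟩ := Submodule.mem_span_singleton.mp hx2
    rcases eq_or_ne c 0 with rfl | hc
    · simp
    · exact absurd (by simpa using p.smul_mem c⁻¹ hx1) (by simpa [hc] using hv)
  have hv0 : v ≠ 0 := fun h => hv (h ▸ p.zero_mem)
  have := Submodule.finrank_sup_add_finrank_inf_eq p (Submodule.span F {v})
  rw [hinf, finrank_bot, finrank_span_singleton hv0] at this
  omega

lemma exists_superspace {V : Type} [AddCommGroup V] [Module F V] [FiniteDimensional F V] :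
    ∀ (k : ℕ) (p : Submodule F V), finrank F p ≤ k → k ≤ finrank F V →
    ∃ X : Submodule F V, p ≤ X ∧ finrank F X = k := by
  intro k
  induction k with
  | zero =>
    intro p h1 _
    refine ⟨⊥, ?_, finrank_bot F V⟩
    rw [(Submodule.finrank_eq_zero (R := F)).mp (Nat.le_zero.mp h1)]
  | succ k ih =>
    intro p h1 h2
    rcases eq_or_lt_of_le h1 with h | h
    · exact ⟨p, le_rfl, h⟩
    · obtain ⟨X, hpX, hX⟩ := ih p (by omega) (by omega)
      obtain ⟨v, hv⟩ := Submodule.exists_of_finrank_lt (R := F) X (by omega)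
      have hv1 : v ∉ X := by simpa using hv 1 one_ne_zero
      exact ⟨X ⊔ Submodule.span F {v}, hpX.trans le_sup_left,
        by rw [finrank_sup_span_singleton hv1, hX]⟩

/-! ### Existence of covering designs -/

lemma coveringNumber_spec [Fintype F] (n k r : ℕ) (hrk : r ≤ k) (hkn : k ≤ n) :
    ∃ S : Finset (Submodule F (Fin n → F)),
      S.card = coveringNumber F n k r ∧
      (∀ X ∈ S, finrank F X = k) ∧
      (∀ Y : Submodule F (Fin n → F), finrank F Y = r → ∃ X ∈ S, Y ≤ X) := by
  classical
  have hfin : Finite (Submodule F (Fin n → F)) :=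
    Finite.of_injective _ (SetLike.coe_injective (A := Submodule F (Fin n → F)))
  have : Fintype (Submodule F (Fin n → F)) := Fintype.ofFinite _
  have hne : { m : ℕ | ∃ S : Finset (Submodule F (Fin n → F)),
      S.card = m ∧ (∀ X ∈ S, finrank F X = k) ∧
      (∀ Y : Submodule F (Fin n → F), finrank F Y = r → ∃ X ∈ S, Y ≤ X) }.Nonempty := by
    refine ⟨_, Finset.univ.filter (fun X => finrank F X = k), rfl, ?_, ?_⟩
    · intro X hX; exact (Finset.mem_filter.mp hX).2
    · intro Y hY
      obtain ⟨X, hYX, hX⟩ := exists_superspace k Y (by rw [hY]; exact hrk)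
        (by rw [Module.finrank_fin_fun]; exact hkn)
      exact ⟨X, Finset.mem_filter.mpr ⟨Finset.mem_univ _, hX⟩, hYX⟩
  exact Nat.sInf_mem hne

/-! ### The extension construction -/

/-- The distinguished vector `e = (0,…,0,1)` outside the hyperplane. -/
noncomputable def lastVec (F : Type) [Field F] (m : ℕ) : Fin (m+1) → F :=
  Pi.single (Fin.last m) 1

/-- `extFun X h` is the `k`-dimensional subspace `emb(X) ⊕ ⟨e + emb(h)⟩`. -/
noncomputable def extFun (m : ℕ) (X : Submodule F (Fin m → F)) (h : Fin m → F) :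
    Submodule F (Fin (m+1) → F) :=
  X.map (emb F m) ⊔ Submodule.span F {lastVec F m + emb F m h}

lemma extFun_congr (m : ℕ) (X : Submodule F (Fin m → F)) {h h' : Fin m → F}
    (hd : h - h' ∈ X) : extFun m X h = extFun m X h' := by
  have key : ∀ a b : Fin m → F, a - b ∈ X → extFun m X a ≤ extFun m X b := by
    intro a b hab
    refine sup_le le_sup_left ((Submodule.span_le).mpr ?_)
    rintro _ rfl
    have h1 : lastVec F m + emb F m a
        = (lastVec F m + emb F m b) + emb F m (a - b) := by
      rw [map_sub]; abel
    rw [h1]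
    exact Submodule.add_mem _
      (Submodule.mem_sup_right (Submodule.mem_span_singleton_self _))
      (Submodule.mem_sup_left ⟨a - b, hab, rfl⟩)
  exact le_antisymm (key h h' hd) (key h' h (by simpa using X.neg_mem hd))

lemma lastVec_add_emb_notMem (m : ℕ) (X : Submodule F (Fin m → F)) (h : Fin m → F) :
    lastVec F m + emb F m h ∉ X.map (emb F m) := by
  intro hmem
  have hle : X.map (emb F m) ≤ LinearMap.range (emb F m) := LinearMap.map_le_range
  rw [range_emb] at hle
  have := hle hmem
  simp only [LinearMap.mem_ker, LinearMap.proj_apply, Pi.add_apply, lastVec,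
    Pi.single_eq_same, emb_last] at this
  norm_num at this

lemma finrank_extFun (m : ℕ)
    (X : Submodule F (Fin m → F)) (h : Fin m → F) :
    finrank F (extFun m X h) = finrank F X + 1 := by
  rw [extFun, finrank_sup_span_singleton (lastVec_add_emb_notMem m X h), finrank_map_emb]

/-- The finset of all extensions of `emb(X)` not inside the hyperplane. -/
noncomputable def extSet [Fintype F] (m : ℕ) (X : Submodule F (Fin m → F)) :
    Finset (Submodule F (Fin (m+1) → F)) :=
  @Finset.image _ _ (Classical.decEq _) (fun y : (Fin m → F) ⧸ X => extFun m X y.out)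
    (@Finset.univ _ (Fintype.ofFinite _))

lemma extFun_mem_extSet [Fintype F] (m : ℕ) (X : Submodule F (Fin m → F)) (h : Fin m → F) :
    extFun m X h ∈ extSet m X := by
  classical
  rw [extSet, Finset.mem_image]

  refine ⟨Submodule.Quotient.mk h, @Finset.mem_univ _ (Fintype.ofFinite _) _, ?_⟩
  apply extFun_congr
  rw [← Submodule.Quotient.eq]
  exact Quotient.out_eq _

lemma card_extSet_le [Fintype F] (m k : ℕ) (X : Submodule F (Fin m → F))
    (hX : finrank F X = k - 1) (hk : 1 ≤ k) (hkm : k ≤ m) :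
    (extSet m X).card ≤ (Fintype.card F) ^ (m + 1 - k) := by
  classical
  letI inst : Fintype ((Fin m → F) ⧸ X) := Fintype.ofFinite _
  have h1 : (extSet m X).card ≤ Fintype.card ((Fin m → F) ⧸ X) := by
    rw [extSet]
    exact Finset.card_image_le.trans (le_of_eq Finset.card_univ)
  have h2 : Fintype.card ((Fin m → F) ⧸ X) = Fintype.card F ^ finrank F ((Fin m → F) ⧸ X) :=
    card_eq_pow_finrank
  have h3 : finrank F ((Fin m → F) ⧸ X) + finrank F X = finrank F (Fin m → F) :=
    Submodule.finrank_quotient_add_finrank X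
  rw [Module.finrank_fin_fun] at h3
  have h4 : finrank F ((Fin m → F) ⧸ X) = m + 1 - k := by omega
  rw [h2, h4] at h1
  exact h1

lemma mem_extSet_finrank [Fintype F] (m : ℕ) (X : Submodule F (Fin m → F))
    (Z : Submodule F (Fin (m+1) → F)) (hZ : Z ∈ extSet m X) :
    finrank F Z = finrank F X + 1 := by
  classical
  rw [extSet, Finset.mem_image] at hZ
  obtain ⟨y, -, rfl⟩ := hZ
  exact finrank_extFun m X _

end Aux

/-- The recursive construction bound. -/
theorem recursive_bound (q n k r : ℕ) (hq : IsPrimePow q)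
    (hr : 1 ≤ r) (hrk : r ≤ k) (hkn : k ≤ n - 1)
    (F : Type) [Field F] [Fintype F] (hF : Fintype.card F = q) :
    coveringNumber F n k r ≤
      q ^ (n - k) * coveringNumber F (n - 1) (k - 1) (r - 1) +
        coveringNumber F (n - 1) k r := by
  classical
  have hk1 : 1 ≤ k := hr.trans hrk
  obtain ⟨m, rfl⟩ : ∃ m, n = m + 1 := ⟨n - 1, by omega⟩
  simp only [Nat.add_sub_cancel] at hkn ⊢
  obtain ⟨S₁, hS₁card, hS₁dim, hS₁cov⟩ :=
    coveringNumber_spec (F := F) m (k-1) (r-1) (by omega) (by omega)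
  obtain ⟨S₂, hS₂card, hS₂dim, hS₂cov⟩ := coveringNumber_spec (F := F) m k r hrk hkn
  set π : (Fin (m+1) → F) →ₗ[F] F := LinearMap.proj (Fin.last m) with hπ
  set H : Submodule F (Fin (m+1) → F) := LinearMap.ker π with hH
  set T : Finset (Submodule F (Fin (m+1) → F)) :=
    S₁.biUnion (fun X => extSet m X) ∪ S₂.image (fun X => X.map (emb F m)) with hT
  -- every element of T has dimension k
  have hTdim : ∀ X ∈ T, finrank F X = k := by
    intro X hX
    rcases Finset.mem_union.mp hX with hX | hX
    · obtain ⟨X₁, hX₁, hXmem⟩ := Finset.mem_biUnion.mp hX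
      rw [mem_extSet_finrank m X₁ X hXmem, hS₁dim X₁ hX₁]
      omega
    · obtain ⟨X₂, hX₂, rfl⟩ := Finset.mem_image.mp hX
      rw [finrank_map_emb]
      exact hS₂dim X₂ hX₂
  -- dimension of H
  have hrange : LinearMap.range π = ⊤ := by
    rw [LinearMap.range_eq_top]
    intro c
    exact ⟨c • lastVec F m, by simp [hπ, lastVec]⟩
  have hHdim : finrank F H = m := by
    have h1 := LinearMap.finrank_range_add_finrank_ker π
    rw [hrange, finrank_top, Module.finrank_self, Module.finrank_fin_fun, ← hH] at h1
    omega
  -- covering property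
  have hTcov : ∀ Y : Submodule F (Fin (m+1) → F), finrank F Y = r → ∃ X ∈ T, Y ≤ X := by
    intro Y hY
    by_cases hYH : Y ≤ H
    · -- Y is inside the hyperplane: use S₂
      have hmap : (Y.comap (emb F m)).map (emb F m) = Y := map_comap_emb m Y hYH
      have hrk0 : finrank F (Y.comap (emb F m)) = r := by
        rw [← finrank_map_emb m (Y.comap (emb F m)), hmap, hY]
      obtain ⟨X₂, hX₂, hle⟩ := hS₂cov _ hrk0
      refine ⟨X₂.map (emb F m), Finset.mem_union_right _ (Finset.mem_image_of_mem _ hX₂), ?_⟩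
      rw [← hmap]
      exact Submodule.map_mono hle
    · -- Y is not inside the hyperplane
      obtain ⟨y, hyY, hyH⟩ := SetLike.not_le_iff_exists.mp hYH
      have hc : y (Fin.last m) ≠ 0 := by
        simpa [hH, hπ, LinearMap.mem_ker] using hyH
      set c : F := y (Fin.last m) with hcdef
      set u : Fin (m+1) → F := c⁻¹ • y with hu
      have huY : u ∈ Y := Y.smul_mem _ hyY
      have hulast : u (Fin.last m) = 1 := by
        simp [hu, hcdef, inv_mul_cancel₀ hc]
        exact inv_mul_cancel₀ hc
      set h : Fin m → F := fun i => u (Fin.castSucc i) with hh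
      have hueq : u = lastVec F m + emb F m h := by
        funext j
        induction j using Fin.lastCases with
        | last => simp [hulast, lastVec]
        | cast i =>
          simp [lastVec, hh, Pi.single_eq_of_ne (Fin.castSucc_lt_last i).ne]
      -- dimension of Y ⊓ H
      have hsup : Y ⊔ H = ⊤ := by
        rw [eq_top_iff]
        intro z _
        refine Submodule.mem_sup.mpr ⟨(z (Fin.last m)) • u, Y.smul_mem _ huY,
          z - (z (Fin.last m)) • u, ?_, by abel⟩
        simp [hH, hπ, LinearMap.mem_ker, hulast]
      have hinf : finrank F (Y ⊓ H : Submodule F (Fin (m+1) → F)) = r - 1 := by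
        have h1 := Submodule.finrank_sup_add_finrank_inf_eq Y H
        rw [hsup, finrank_top, Module.finrank_fin_fun, hY, hHdim] at h1
        omega
      -- cover Y ⊓ H by an element of S₁
      have hmap : ((Y ⊓ H).comap (emb F m)).map (emb F m) = Y ⊓ H :=
        map_comap_emb m _ inf_le_right
      have hrk0 : finrank F ((Y ⊓ H).comap (emb F m)) = r - 1 := by
        rw [← finrank_map_emb m ((Y ⊓ H).comap (emb F m)), hmap, hinf]
      obtain ⟨X₁, hX₁, hle⟩ := hS₁cov _ hrk0
      refine ⟨extFun m X₁ h,
        Finset.mem_union_left _ (Finset.mem_biUnion.mpr ⟨X₁, hX₁, extFun_mem_extSet m X₁ h⟩), ?_⟩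
      -- show Y ≤ extFun m X₁ h
      intro z hz
      have hzsub : z - (z (Fin.last m)) • u ∈ Y ⊓ H := by
        refine ⟨Y.sub_mem hz (Y.smul_mem _ huY), ?_⟩
        simp [hH, hπ, LinearMap.mem_ker, hulast]
      have h1 : z - (z (Fin.last m)) • u ∈ X₁.map (emb F m) := by
        rw [← hmap] at hzsub
        exact Submodule.map_mono hle hzsub
      have h2 : (z (Fin.last m)) • u ∈ Submodule.span F {lastVec F m + emb F m h} := by
        rw [← hueq]
        exact Submodule.smul_mem _ _ (Submodule.mem_span_singleton_self u)
      have : z = (z - (z (Fin.last m)) • u) + (z (Fin.last m)) • u := by abel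
      rw [this]
      exact Submodule.add_mem _ (Submodule.mem_sup_left h1) (Submodule.mem_sup_right h2)
  -- cardinality bound
  have hTcard : T.card ≤ q ^ (m + 1 - k) * coveringNumber F m (k-1) (r-1)
      + coveringNumber F m k r := by
    calc T.card ≤ (S₁.biUnion (fun X => extSet m X)).card
          + (S₂.image (fun X => X.map (emb F m))).card := Finset.card_union_le _ _
      _ ≤ (∑ X ∈ S₁, (extSet m X).card) + S₂.card := by
          gcongr
          · exact Finset.card_biUnion_le
          · exact Finset.card_image_le
      _ ≤ (∑ _X ∈ S₁, q ^ (m + 1 - k)) + S₂.card := by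
          gcongr with X hX
          calc (extSet m X).card ≤ (Fintype.card F) ^ (m + 1 - k) :=
                card_extSet_le m k X (hS₁dim X hX) hk1 hkn
            _ = q ^ (m + 1 - k) := by rw [hF]
      _ = q ^ (m + 1 - k) * S₁.card + S₂.card := by
          rw [Finset.sum_const, smul_eq_mul, mul_comm]
      _ = _ := by rw [hS₁card, hS₂card]
  exact le_trans (Nat.sInf_le ⟨T, rfl, hTdim, hTcov⟩) hTcard
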